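/- For Λ > 0, 1 < p < 3, and r ∈ (0, R_Λ), the function A_p(r) = (1/(p-1))·√(1-(Λ/3)r²)·r^{(3-p)/(p-1)}·∫_r^{R_Λ} ρ^{-2/(p-1)}(1-(Λ/3)ρ²)^{-1/2} dρ satisfies lim_{p→1⁺} A_p(r) = 1/2 for every fixed r ∈ (0, R_Λ). -/

import Mathlib

open Real Filter MeasureTheory

/-- The radial profile of the model `p`-Green's function. -/
noncomputable def uModel (Λ p r : ℝ) : ℝ :=
  ∫ ρ in r..Real.sqrt (3 / Λ), ρ ^ (-(2 / (p - 1))) / Real.sqrt (1 - Λ / 3 * ρ ^ 2)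

/-- The quantity `A_p(r)` of the model. -/
noncomputable def AModel (Λ p r : ℝ) : ℝ :=
  1 / (p - 1) * Real.sqrt (1 - Λ / 3 * r ^ 2) * r ^ ((3 - p) / (p - 1)) * uModel Λ p r

section AuxLemmas

variable {Λ : ℝ}

lemma aux_one_sub_pos (hΛ : 0 < Λ) {x : ℝ} (hx0 : 0 ≤ x) (hx : x < Real.sqrt (3 / Λ)) :
    0 < 1 - Λ / 3 * x ^ 2 := by
  have hR2 : (Real.sqrt (3 / Λ)) ^ 2 = 3 / Λ := Real.sq_sqrt (by positivity)
  have hx2 : x ^ 2 < 3 / Λ := by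
    rw [← hR2]
    exact sq_lt_sq' (by linarith [Real.sqrt_nonneg (3 / Λ)]) hx
  have h1 : Λ / 3 * x ^ 2 < Λ / 3 * (3 / Λ) :=
    mul_lt_mul_of_pos_left hx2 (by positivity)
  have h2 : Λ / 3 * (3 / Λ) = 1 := by field_simp
  linarith

lemma aux_integrable (hΛ : 0 < Λ) {r : ℝ} (hr0 : 0 < r) (hrR : r ≤ Real.sqrt (3 / Λ)) (a : ℝ) :
    IntervalIntegrable (fun ρ : ℝ => ρ ^ a / Real.sqrt (1 - Λ / 3 * ρ ^ 2))
      volume r (Real.sqrt (3 / Λ)) := by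
  set R := Real.sqrt (3 / Λ) with hRdef
  have hR0 : 0 < R := lt_of_lt_of_le hr0 hrR
  have hR2 : R ^ 2 = 3 / Λ := Real.sq_sqrt (by positivity)
  have hΛR : Λ / 3 * R ^ 2 = 1 := by rw [hR2]; field_simp
  set c : ℝ := Real.sqrt (Λ / 3 * R) with hcdef
  have hc0 : 0 < c := Real.sqrt_pos.mpr (by positivity)
  set K : ℝ := (r ^ a + R ^ a) / c with hKdef
  have hK0 : 0 ≤ K := by positivity
  have hmaj : IntervalIntegrable (fun x : ℝ => K * (R - x) ^ (-(1 / 2) : ℝ)) volume r R := by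
    have h1 : IntervalIntegrable (fun x : ℝ => x ^ (-(1 / 2) : ℝ)) volume (R - r) (R - R) :=
      intervalIntegral.intervalIntegrable_rpow' (by norm_num)
    have h2 := (h1.comp_sub_left R).const_mul K
    simpa using h2
  refine hmaj.mono_fun ?_ ?_
  · apply Measurable.aestronglyMeasurable
    fun_prop
  · filter_upwards [MeasureTheory.ae_restrict_mem measurableSet_uIoc] with x hx
    rw [Set.uIoc_of_le hrR] at hx
    obtain ⟨hx1, hx2⟩ := hx
    have hx0 : 0 < x := hr0.trans hx1
    have hRx0 : 0 ≤ R - x := by linarith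
    simp only [Real.norm_eq_abs]
    rw [abs_of_nonneg (by positivity), abs_of_nonneg (mul_nonneg hK0 (Real.rpow_nonneg hRx0 _))]
    have hnum : x ^ a ≤ r ^ a + R ^ a := by
      rcases le_or_gt 0 a with ha | ha
      · have h1 := Real.rpow_le_rpow hx0.le hx2 ha
        have h2 : (0 : ℝ) ≤ r ^ a := Real.rpow_nonneg hr0.le a
        linarith
      · have h1 := Real.rpow_le_rpow_of_nonpos hr0 hx1.le ha.le
        have h2 : (0 : ℝ) ≤ R ^ a := Real.rpow_nonneg hR0.le a
        linarith
    have hden : c * Real.sqrt (R - x) ≤ Real.sqrt (1 - Λ / 3 * x ^ 2) := by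
      rw [hcdef, ← Real.sqrt_mul (by positivity)]
      apply Real.sqrt_le_sqrt
      nlinarith [mul_nonneg (mul_nonneg (le_of_lt hΛ) hx0.le) hRx0]
    have hKeq : K * (R - x) ^ (-(1 / 2) : ℝ) = (r ^ a + R ^ a) / (c * Real.sqrt (R - x)) := by
      rw [Real.rpow_neg hRx0, Real.sqrt_eq_rpow, hKdef, ← div_eq_mul_inv, div_div, mul_comm c]
    rw [hKeq]
    rcases eq_or_lt_of_le hx2 with h | h
    · have hzero : 1 - Λ / 3 * x ^ 2 = 0 := by rw [← h] at hΛR; linarith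
      rw [hzero, Real.sqrt_zero, div_zero]
      positivity
    · exact div_le_div₀ (by positivity) hnum
        (mul_pos hc0 (Real.sqrt_pos.mpr (by linarith))) hden

lemma aux_exp_eq {p : ℝ} (hp1 : 1 < p) : -(2 / (p - 1)) = -((3 - p) / (p - 1) + 1) := by
  have h : p - 1 ≠ 0 := by linarith
  field_simp
  ring

lemma aux_algebra_lower {B ar aR e q : ℝ} (hB : B ≠ 0) (har : ar ≠ 0) (haR : aR ≠ 0)
    (hq : q ≠ 0) (he : e ≠ 0) :
    (1 - ar / aR) / (q * e) = 1 / q * B * ar * ((aR⁻¹ - ar⁻¹) / (-e) * (1 / B)) := by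
  field_simp
  ring

lemma aux_algebra_upper {B ar as s C gs e q : ℝ} (hB : 0 < B) (har : 0 < ar) (has : 0 < as)
    (hs : 0 < s) (hC : 0 ≤ C) (hgs : 0 < gs) (he : 0 < e) (hq : 0 < q) :
    1 / q * B * ar * ((as⁻¹ - ar⁻¹) / (-e) * gs + as⁻¹ * s⁻¹ * C)
      ≤ B * gs / (q * e) + B * C / s * (ar / as / q) := by
  have key1 : 1 / q * B * ar * ((as⁻¹ - ar⁻¹) / (-e) * gs) = B * gs * (1 - ar / as) / (q * e) := by
    field_simp
    ring
  have key2 : 1 / q * B * ar * (as⁻¹ * s⁻¹ * C) = B * C / s * (ar / as / q) := by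
    field_simp
  rw [mul_add, key1, key2]
  have h1 : B * gs * (1 - ar / as) ≤ B * gs := by
    nlinarith [mul_pos hB hgs, div_pos har has]
  have h2 := mul_le_mul_of_nonneg_right h1 (by positivity : (0:ℝ) ≤ (q * e)⁻¹)
  rw [← div_eq_mul_inv, ← div_eq_mul_inv] at h2
  linarith

/-- Lower bound for `AModel`. -/
lemma aux_lower (hΛ : 0 < Λ) {r R' p : ℝ} (hr0 : 0 < r) (hrR' : r < R')
    (hR'R : R' < Real.sqrt (3 / Λ)) (hp1 : 1 < p) (hp2 : p < 2) :
    (1 - (r / R') ^ ((3 - p) / (p - 1))) / (3 - p) ≤ AModel Λ p r := by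
  set R := Real.sqrt (3 / Λ) with hRdef
  have hR0 : 0 < R := hr0.trans (hrR'.trans hR'R)
  have hrR : r < R := hrR'.trans hR'R
  have hR'0 : 0 < R' := hr0.trans hrR'
  have hq : 0 < p - 1 := by linarith
  set e := (3 - p) / (p - 1) with he_def
  have he : 0 < e := div_pos (by linarith) hq
  have hqe : (p - 1) * e = 3 - p := by
    rw [he_def]
    field_simp
  have hB : 0 < Real.sqrt (1 - Λ / 3 * r ^ 2) :=
    Real.sqrt_pos.mpr (aux_one_sub_pos hΛ hr0.le hrR)
  set B := Real.sqrt (1 - Λ / 3 * r ^ 2) with hBdef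
  set g : ℝ → ℝ := fun ρ => ρ ^ (-(e + 1)) / Real.sqrt (1 - Λ / 3 * ρ ^ 2) with hgdef
  have hexp : -(2 / (p - 1)) = -(e + 1) := by rw [he_def]; exact aux_exp_eq hp1
  have hu : uModel Λ p r = ∫ ρ in r..R, g ρ := by
    rw [uModel, hexp, ← hRdef]
  have hmem : ∀ {x : ℝ}, r ≤ x → x ≤ R → x ∈ Set.uIcc r R := fun h1 h2 =>
    Set.mem_uIcc.mpr (Or.inl ⟨h1, h2⟩)
  have hint : IntervalIntegrable g volume r R := aux_integrable hΛ hr0 hrR.le _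
  have hint1 : IntervalIntegrable g volume r R' :=
    hint.mono_set (Set.uIcc_subset_uIcc (hmem le_rfl hrR.le) (hmem hrR'.le hR'R.le))
  have hint2 : IntervalIntegrable g volume R' R :=
    hint.mono_set (Set.uIcc_subset_uIcc (hmem hrR'.le hR'R.le) (hmem hrR.le le_rfl))
  have hcomp : ∀ x ∈ Set.Icc r R', x ^ (-(e + 1)) * (1 / B) ≤ g x := by
    intro x hx
    have hx0 : 0 < x := lt_of_lt_of_le hr0 hx.1
    have hxR : x < R := lt_of_le_of_lt hx.2 hR'R
    have hxx : r ^ 2 ≤ x ^ 2 := by nlinarith [hx.1]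
    have hd : Real.sqrt (1 - Λ / 3 * x ^ 2) ≤ B := by
      rw [hBdef]
      apply Real.sqrt_le_sqrt
      nlinarith [mul_le_mul_of_nonneg_left hxx (by positivity : (0:ℝ) ≤ Λ / 3)]
    simp only [hgdef, mul_one_div]
    exact div_le_div_of_nonneg_left (Real.rpow_nonneg hx0.le _)
      (Real.sqrt_pos.mpr (aux_one_sub_pos hΛ hx0.le hxR)) hd
  have hintc : IntervalIntegrable (fun x : ℝ => x ^ (-(e + 1)) * (1 / B)) volume r R' :=
    (intervalIntegral.intervalIntegrable_rpow
      (Or.inr (Set.notMem_uIcc_of_lt hr0 hR'0))).mul_const _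
  have hmono := intervalIntegral.integral_mono_on hrR'.le hintc hint1 hcomp
  have hne : -(e + 1) ≠ -1 := by
    intro hcon
    rw [neg_inj] at hcon
    linarith
  have hval : (∫ x in r..R', x ^ (-(e + 1)) * (1 / B))
      = ((R' ^ (-e) - r ^ (-e)) / (-e)) * (1 / B) := by
    rw [intervalIntegral.integral_mul_const, integral_rpow
      (Or.inr ⟨hne, Set.notMem_uIcc_of_lt hr0 hR'0⟩)]
    norm_num
  have hnonneg2 : 0 ≤ ∫ x in R'..R, g x := by
    apply intervalIntegral.integral_nonneg hR'R.le
    intro u hu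
    have hu0 : 0 < u := lt_of_lt_of_le hR'0 hu.1
    simp only [hgdef]
    positivity
  have hsplit : (∫ x in r..R', g x) + ∫ x in R'..R, g x = ∫ x in r..R, g x :=
    intervalIntegral.integral_add_adjacent_intervals hint1 hint2
  have hulow : ((R' ^ (-e) - r ^ (-e)) / (-e)) * (1 / B) ≤ uModel Λ p r := by
    rw [hu, ← hsplit]
    calc ((R' ^ (-e) - r ^ (-e)) / (-e)) * (1 / B)
        = ∫ x in r..R', x ^ (-(e + 1)) * (1 / B) := hval.symm
      _ ≤ ∫ x in r..R', g x := hmono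
      _ ≤ (∫ x in r..R', g x) + ∫ x in R'..R, g x := le_add_of_nonneg_right hnonneg2
  have hA : AModel Λ p r = 1 / (p - 1) * B * r ^ e * uModel Λ p r := rfl
  have hfac : 0 ≤ 1 / (p - 1) * B * r ^ e := by positivity
  have hstep := mul_le_mul_of_nonneg_left hulow hfac
  rw [← hA] at hstep
  refine le_trans (le_of_eq ?_) hstep
  have h1 : (r / R') ^ e = r ^ e / R' ^ e := Real.div_rpow hr0.le hR'0.le e
  have h2 : r ^ (-e) = (r ^ e)⁻¹ := Real.rpow_neg hr0.le e
  have h3 : R' ^ (-e) = (R' ^ e)⁻¹ := Real.rpow_neg hR'0.le e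
  rw [h1, h2, h3, ← hqe]
  exact aux_algebra_lower (ne_of_gt hB) (ne_of_gt (Real.rpow_pos_of_pos hr0 e))
    (ne_of_gt (Real.rpow_pos_of_pos hR'0 e)) (ne_of_gt hq) (ne_of_gt he)

/-- Upper bound for `AModel`. -/
lemma aux_upper (hΛ : 0 < Λ) {r s p : ℝ} (hr0 : 0 < r) (hrs : r < s)
    (hsR : s < Real.sqrt (3 / Λ)) (hp1 : 1 < p) (hp2 : p < 2) :
    AModel Λ p r ≤
      Real.sqrt (1 - Λ / 3 * r ^ 2) * (1 / Real.sqrt (1 - Λ / 3 * s ^ 2)) / (3 - p)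
      + Real.sqrt (1 - Λ / 3 * r ^ 2)
          * (∫ ρ in s..Real.sqrt (3 / Λ), 1 / Real.sqrt (1 - Λ / 3 * ρ ^ 2)) / s
        * ((r / s) ^ ((3 - p) / (p - 1)) / (p - 1)) := by
  set R := Real.sqrt (3 / Λ) with hRdef
  have hs0 : 0 < s := hr0.trans hrs
  have hR0 : 0 < R := hs0.trans hsR
  have hrR : r < R := hrs.trans hsR
  have hq : 0 < p - 1 := by linarith
  set e := (3 - p) / (p - 1) with he_def
  have he : 0 < e := div_pos (by linarith) hq
  have hqe : (p - 1) * e = 3 - p := by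
    rw [he_def]
    field_simp
  have hB : 0 < Real.sqrt (1 - Λ / 3 * r ^ 2) :=
    Real.sqrt_pos.mpr (aux_one_sub_pos hΛ hr0.le hrR)
  set B := Real.sqrt (1 - Λ / 3 * r ^ 2) with hBdef
  have hgs : 0 < Real.sqrt (1 - Λ / 3 * s ^ 2) :=
    Real.sqrt_pos.mpr (aux_one_sub_pos hΛ hs0.le hsR)
  set gs := 1 / Real.sqrt (1 - Λ / 3 * s ^ 2) with hgsdef
  have hgs0 : 0 < gs := by rw [hgsdef]; positivity
  set g : ℝ → ℝ := fun ρ => ρ ^ (-(e + 1)) / Real.sqrt (1 - Λ / 3 * ρ ^ 2) with hgdef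
  have hexp : -(2 / (p - 1)) = -(e + 1) := by rw [he_def]; exact aux_exp_eq hp1
  have hu : uModel Λ p r = ∫ ρ in r..R, g ρ := by
    rw [uModel, hexp, ← hRdef]
  have hmem : ∀ {x : ℝ}, r ≤ x → x ≤ R → x ∈ Set.uIcc r R := fun h1 h2 =>
    Set.mem_uIcc.mpr (Or.inl ⟨h1, h2⟩)
  have hint : IntervalIntegrable g volume r R := aux_integrable hΛ hr0 hrR.le _
  have hint1 : IntervalIntegrable g volume r s :=
    hint.mono_set (Set.uIcc_subset_uIcc (hmem le_rfl hrR.le) (hmem hrs.le hsR.le))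
  have hint2 : IntervalIntegrable g volume s R :=
    hint.mono_set (Set.uIcc_subset_uIcc (hmem hrs.le hsR.le) (hmem hrR.le le_rfl))
  have hint0 : IntervalIntegrable (fun ρ : ℝ => 1 / Real.sqrt (1 - Λ / 3 * ρ ^ 2)) volume s R := by
    have h := aux_integrable hΛ hs0 hsR.le 0
    rw [← hRdef] at h
    refine h.congr ?_
    intro x _
    simp only [Real.rpow_zero]
  set C := ∫ ρ in s..R, 1 / Real.sqrt (1 - Λ / 3 * ρ ^ 2) with hCdef
  have hC0 : 0 ≤ C := by
    rw [hCdef]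
    apply intervalIntegral.integral_nonneg hsR.le
    intro u _
    positivity
  have hcomp1 : ∀ x ∈ Set.Icc r s, g x ≤ x ^ (-(e + 1)) * gs := by
    intro x hx
    have hx0 : 0 < x := lt_of_lt_of_le hr0 hx.1
    have hxx : x ^ 2 ≤ s ^ 2 := by nlinarith [hx.2]
    have hd : Real.sqrt (1 - Λ / 3 * s ^ 2) ≤ Real.sqrt (1 - Λ / 3 * x ^ 2) := by
      apply Real.sqrt_le_sqrt
      nlinarith [mul_le_mul_of_nonneg_left hxx (by positivity : (0:ℝ) ≤ Λ / 3)]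
    simp only [hgdef, hgsdef, mul_one_div]
    exact div_le_div_of_nonneg_left (Real.rpow_nonneg hx0.le _) hgs hd
  have hintc1 : IntervalIntegrable (fun x : ℝ => x ^ (-(e + 1)) * gs) volume r s :=
    (intervalIntegral.intervalIntegrable_rpow
      (Or.inr (Set.notMem_uIcc_of_lt hr0 hs0))).mul_const _
  have hmono1 := intervalIntegral.integral_mono_on hrs.le hint1 hintc1 hcomp1
  have hne : -(e + 1) ≠ -1 := by
    intro hcon
    rw [neg_inj] at hcon
    linarith
  have hval1 : (∫ x in r..s, x ^ (-(e + 1)) * gs) = ((s ^ (-e) - r ^ (-e)) / (-e)) * gs := by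
    rw [intervalIntegral.integral_mul_const, integral_rpow
      (Or.inr ⟨hne, Set.notMem_uIcc_of_lt hr0 hs0⟩)]
    norm_num
  have hcomp2 : ∀ x ∈ Set.Icc s R,
      g x ≤ s ^ (-(e + 1)) * (1 / Real.sqrt (1 - Λ / 3 * x ^ 2)) := by
    intro x hx
    have hxe : x ^ (-(e + 1)) ≤ s ^ (-(e + 1)) :=
      Real.rpow_le_rpow_of_nonpos hs0 hx.1 (by linarith)
    simp only [hgdef]
    rw [div_eq_mul_one_div]
    exact mul_le_mul_of_nonneg_right hxe (by positivity)
  have hintc2 : IntervalIntegrable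
      (fun x : ℝ => s ^ (-(e + 1)) * (1 / Real.sqrt (1 - Λ / 3 * x ^ 2))) volume s R :=
    hint0.const_mul _
  have hmono2 := intervalIntegral.integral_mono_on hsR.le hint2 hintc2 hcomp2
  have hval2 : (∫ x in s..R, s ^ (-(e + 1)) * (1 / Real.sqrt (1 - Λ / 3 * x ^ 2)))
      = s ^ (-(e + 1)) * C := by
    rw [intervalIntegral.integral_const_mul, hCdef]
  have hsplit : (∫ x in r..s, g x) + ∫ x in s..R, g x = ∫ x in r..R, g x :=
    intervalIntegral.integral_add_adjacent_intervals hint1 hint2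
  have huup : uModel Λ p r ≤ ((s ^ (-e) - r ^ (-e)) / (-e)) * gs + s ^ (-(e + 1)) * C := by
    rw [hu, ← hsplit, ← hval1, ← hval2]
    exact add_le_add hmono1 hmono2
  have hA : AModel Λ p r = 1 / (p - 1) * B * r ^ e * uModel Λ p r := rfl
  have hfac : 0 ≤ 1 / (p - 1) * B * r ^ e := by positivity
  have hstep := mul_le_mul_of_nonneg_left huup hfac
  rw [← hA] at hstep
  refine le_trans hstep ?_
  have h1 : (r / s) ^ e = r ^ e / s ^ e := Real.div_rpow hr0.le hs0.le e
  have h2 : r ^ (-e) = (r ^ e)⁻¹ := Real.rpow_neg hr0.le e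
  have h3 : s ^ (-e) = (s ^ e)⁻¹ := Real.rpow_neg hs0.le e
  have h4 : s ^ (-(e + 1)) = (s ^ e)⁻¹ * s⁻¹ := by
    rw [show -(e + 1) = -e + -1 by ring, Real.rpow_add hs0, h3, Real.rpow_neg_one]
  rw [h1, h2, h3, h4, ← hqe]
  exact aux_algebra_upper hB (Real.rpow_pos_of_pos hr0 e) (Real.rpow_pos_of_pos hs0 e)
    hs0 hC0 hgs0 he hq

lemma aux_tendsto_inv : Tendsto (fun p : ℝ => (p - 1)⁻¹) (nhdsWithin 1 (Set.Ioi 1)) atTop := by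
  apply tendsto_inv_nhdsGT_zero.comp
  apply tendsto_nhdsWithin_of_tendsto_nhds_of_eventually_within
  · have h0 : Tendsto (fun p : ℝ => p - 1) (nhds 1) (nhds (1 - 1)) :=
      (continuous_id.sub continuous_const).tendsto 1
    rw [sub_self] at h0
    exact h0.mono_left nhdsWithin_le_nhds
  · filter_upwards [self_mem_nhdsWithin] with p hp
    have : (1 : ℝ) < p := hp
    simpa [Set.mem_Ioi] using sub_pos.mpr this

lemma aux_tendsto_den : Tendsto (fun p : ℝ => 3 - p) (nhdsWithin 1 (Set.Ioi 1)) (nhds 2) := by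
  have h0 : Tendsto (fun p : ℝ => 3 - p) (nhds (1 : ℝ)) (nhds (3 - 1)) :=
    (continuous_const.sub continuous_id).tendsto 1
  norm_num at h0
  exact h0.mono_left nhdsWithin_le_nhds

lemma aux_tendsto_e :
    Tendsto (fun p : ℝ => (3 - p) / (p - 1)) (nhdsWithin 1 (Set.Ioi 1)) atTop := by
  have := aux_tendsto_den.pos_mul_atTop two_pos aux_tendsto_inv
  exact this.congr fun p => (div_eq_mul_inv _ _).symm

lemma aux_tendsto_pow {c : ℝ} (hc0 : 0 ≤ c) (hc1 : c < 1) :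
    Tendsto (fun p : ℝ => c ^ ((3 - p) / (p - 1))) (nhdsWithin 1 (Set.Ioi 1)) (nhds 0) :=
  (tendsto_rpow_atTop_of_base_lt_one c (by linarith) hc1).comp aux_tendsto_e

lemma aux_tendsto_T2 {c : ℝ} (hc0 : 0 < c) (hc1 : c < 1) :
    Tendsto (fun p : ℝ => c ^ ((3 - p) / (p - 1)) / (p - 1)) (nhdsWithin 1 (Set.Ioi 1))
      (nhds 0) := by
  set b := -(2 * Real.log c) with hbdef
  have hb : 0 < b := by
    have := Real.log_neg hc0 hc1
    rw [hbdef]; linarith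
  have key : Tendsto (fun t : ℝ => t ^ (1 : ℝ) * Real.exp (-b * t)) atTop (nhds 0) :=
    tendsto_rpow_mul_exp_neg_mul_atTop_nhds_zero 1 b hb
  have key2 : Tendsto (fun t : ℝ => c⁻¹ * (t ^ (1 : ℝ) * Real.exp (-b * t))) atTop (nhds 0) := by
    have := key.const_mul c⁻¹
    simpa using this
  have heq : ∀ t : ℝ, c⁻¹ * (t ^ (1 : ℝ) * Real.exp (-b * t)) = t * c ^ (2 * t - 1) := by
    intro t
    rw [Real.rpow_def_of_pos hc0 (2 * t - 1), Real.rpow_one]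
    rw [show Real.log c * (2 * t - 1) = -b * t + -Real.log c by rw [hbdef]; ring]
    rw [Real.exp_add, Real.exp_neg, Real.exp_log hc0]
    ring
  have key3 : Tendsto (fun t : ℝ => t * c ^ (2 * t - 1)) atTop (nhds 0) :=
    key2.congr heq
  have key4 := key3.comp aux_tendsto_inv
  apply key4.congr'
  filter_upwards [self_mem_nhdsWithin] with p hp
  have hq : p - 1 ≠ 0 := by
    have : (1 : ℝ) < p := hp
    linarith
  simp only [Function.comp_apply]
  rw [show 2 * (p - 1)⁻¹ - 1 = (3 - p) / (p - 1) by field_simp; ring]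
  field_simp

end AuxLemmas

/-- For every fixed `r ∈ (0, R_Λ)`, `A_p(r) → 1/2` as `p → 1⁺`. -/
theorem stmt_16 (Λ : ℝ) (hΛ : 0 < Λ) (r : ℝ)
    (hr : r ∈ Set.Ioo (0 : ℝ) (Real.sqrt (3 / Λ))) :
    Tendsto (fun p : ℝ => AModel Λ p r) (nhdsWithin 1 (Set.Ioi 1))
      (nhds (1 / 2)) := by
  obtain ⟨hr0, hrR⟩ := hr
  set R := Real.sqrt (3 / Λ) with hRdef
  have hR0 : 0 < R := hr0.trans hrR
  have hB : 0 < Real.sqrt (1 - Λ / 3 * r ^ 2) :=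
    Real.sqrt_pos.mpr (aux_one_sub_pos hΛ hr0.le hrR)
  set B := Real.sqrt (1 - Λ / 3 * r ^ 2) with hBdef
  rw [Metric.tendsto_nhds]
  intro ε hε
  set R' := (r + R) / 2 with hR'def
  have hrR' : r < R' := by rw [hR'def]; linarith
  have hR'R : R' < R := by rw [hR'def]; linarith
  have hR'0 : 0 < R' := hr0.trans hrR'
  have hcL0 : 0 ≤ r / R' := by positivity
  have hcL1 : r / R' < 1 := (div_lt_one hR'0).mpr hrR'
  have hLlim : Tendsto (fun p : ℝ => (1 - (r / R') ^ ((3 - p) / (p - 1))) / (3 - p))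
      (nhdsWithin 1 (Set.Ioi 1)) (nhds (1 / 2)) := by
    have hnum : Tendsto (fun p : ℝ => 1 - (r / R') ^ ((3 - p) / (p - 1)))
        (nhdsWithin 1 (Set.Ioi 1)) (nhds (1 - 0)) :=
      tendsto_const_nhds.sub (aux_tendsto_pow hcL0 hcL1)
    rw [sub_zero] at hnum
    have h := hnum.div aux_tendsto_den (by norm_num)
    exact h
  have hLev : ∀ᶠ p in nhdsWithin 1 (Set.Ioi 1),
      1 / 2 - ε < (1 - (r / R') ^ ((3 - p) / (p - 1))) / (3 - p) :=
    hLlim.eventually_const_lt (by linarith)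
  have hφcont : ContinuousAt (fun x : ℝ => B / Real.sqrt (1 - Λ / 3 * x ^ 2)) r := by
    apply ContinuousAt.div continuousAt_const
    · exact (Real.continuous_sqrt.comp
        (continuous_const.sub (continuous_const.mul (continuous_pow 2)))).continuousAt
    · exact ne_of_gt hB
  obtain ⟨s, hsmem, hsval⟩ :
      ∃ s, s ∈ Set.Ioo r R ∧ B / Real.sqrt (1 - Λ / 3 * s ^ 2) < 1 + ε := by
    have h1 : Tendsto (fun x : ℝ => B / Real.sqrt (1 - Λ / 3 * x ^ 2)) (nhds r)
        (nhds (B / B)) := hφcont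
    rw [div_self (ne_of_gt hB)] at h1
    have hev1 : ∀ᶠ x in nhdsWithin r (Set.Ioi r),
        B / Real.sqrt (1 - Λ / 3 * x ^ 2) < 1 + ε :=
      (h1.mono_left nhdsWithin_le_nhds).eventually_lt_const (by linarith)
    have hev2 : ∀ᶠ x in nhdsWithin r (Set.Ioi r), x ∈ Set.Ioo r R :=
      Ioo_mem_nhdsGT_of_mem ⟨le_refl r, hrR⟩
    exact (hev2.and hev1).exists
  obtain ⟨hrs, hsR⟩ := hsmem
  have hs0 : 0 < s := hr0.trans hrs
  have hgs : 0 < Real.sqrt (1 - Λ / 3 * s ^ 2) :=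
    Real.sqrt_pos.mpr (aux_one_sub_pos hΛ hs0.le hsR)
  set gs := 1 / Real.sqrt (1 - Λ / 3 * s ^ 2) with hgsdef
  set C := ∫ ρ in s..R, 1 / Real.sqrt (1 - Λ / 3 * ρ ^ 2) with hCdef
  have hBgs : B * gs < 1 + ε := by
    rw [hgsdef, mul_one_div]
    exact hsval
  have hcU1 : r / s < 1 := (div_lt_one hs0).mpr hrs
  have hUlim : Tendsto (fun p : ℝ => B * gs / (3 - p)
      + B * C / s * ((r / s) ^ ((3 - p) / (p - 1)) / (p - 1)))
      (nhdsWithin 1 (Set.Ioi 1)) (nhds (B * gs / 2)) := by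
    have t1 : Tendsto (fun p : ℝ => B * gs / (3 - p)) (nhdsWithin 1 (Set.Ioi 1))
        (nhds (B * gs / 2)) := tendsto_const_nhds.div aux_tendsto_den (by norm_num)
    have t2 : Tendsto (fun p : ℝ => B * C / s * ((r / s) ^ ((3 - p) / (p - 1)) / (p - 1)))
        (nhdsWithin 1 (Set.Ioi 1)) (nhds 0) := by
      have h := (aux_tendsto_T2 (by positivity) hcU1).const_mul (B * C / s)
      simpa using h
    have h := t1.add t2
    simpa using h
  have hUev : ∀ᶠ p in nhdsWithin 1 (Set.Ioi 1),
      B * gs / (3 - p) + B * C / s * ((r / s) ^ ((3 - p) / (p - 1)) / (p - 1)) < 1 / 2 + ε :=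
    hUlim.eventually_lt_const (by linarith)
  filter_upwards [hLev, hUev, Ioo_mem_nhdsGT_of_mem (Set.left_mem_Ico.mpr one_lt_two)]
    with p hL hU hp
  obtain ⟨hp1, hp2⟩ := hp
  have hlow := aux_lower hΛ hr0 hrR' hR'R hp1 hp2
  have hup := aux_upper hΛ hr0 hrs hsR hp1 hp2
  rw [← hRdef, ← hBdef, ← hgsdef, ← hCdef] at hup
  rw [Real.dist_eq, abs_lt]
  constructor
  · linarith
  · linarith
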